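/- Let p = exp(φ) and p̄ = exp(φ̄) be log-concave densities on ℝ, where φ̄ is piecewise affine: there is a partition of ℝ into at most D+1 intervals on each of which φ̄ is either affine or identically -∞. Then the set {x : p(x) > p̄(x)} is a union of at most D+1 intervals, and the set {x : p(x) < p̄(x)} is a union of at most D+2 intervals. -/

import Mathlib

open MeasureTheory

/-- If `log p` is concave on `{p > 0}` (which is ord-connected) and `p` dominates
an exponential-of-affine at two points, it dominates it in between (non-strict). -/
lemma exp_affine_le_of_between (p : ℝ → ℝ)
    (hpord : ({x | 0 < p x}).OrdConnected)
    (hpconc : ConcaveOn ℝ {x | 0 < p x} (fun x => Real.log (p x)))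
    (c d x y z : ℝ) (hx : Real.exp (c * x + d) ≤ p x) (hy : Real.exp (c * y + d) ≤ p y)
    (hxz : x < z) (hzy : z < y) : Real.exp (c * z + d) ≤ p z := by
  have hpx : 0 < p x := lt_of_lt_of_le (Real.exp_pos _) hx
  have hpy : 0 < p y := lt_of_lt_of_le (Real.exp_pos _) hy
  have hpz : 0 < p z := hpord.out hpx hpy ⟨hxz.le, hzy.le⟩
  have hyx : (0:ℝ) < y - x := by linarith
  set t := (y - z) / (y - x) with ht_def
  set s := (z - x) / (y - x) with hs_def
  have ht : 0 < t := div_pos (by linarith) hyx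
  have hs : 0 < s := div_pos (by linarith) hyx
  have hts : t + s = 1 := by rw [ht_def, hs_def]; field_simp; ring
  have hz : t * x + s * y = z := by rw [ht_def, hs_def]; field_simp; ring
  have hcon := hpconc.2 (Set.mem_setOf.mpr hpx) (Set.mem_setOf.mpr hpy) ht.le hs.le hts
  simp only [smul_eq_mul, hz] at hcon
  have hlx : c * x + d ≤ Real.log (p x) := (Real.le_log_iff_exp_le hpx).mpr hx
  have hly : c * y + d ≤ Real.log (p y) := (Real.le_log_iff_exp_le hpy).mpr hy
  have e1 : t * (c * x + d) + s * (c * y + d) = c * z + d := by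
    linear_combination c * hz + d * hts
  have h1 : t * (c * x + d) ≤ t * Real.log (p x) := mul_le_mul_of_nonneg_left hlx ht.le
  have h2 : s * (c * y + d) ≤ s * Real.log (p y) := mul_le_mul_of_nonneg_left hly hs.le
  have hkey : c * z + d ≤ Real.log (p z) := by linarith
  calc Real.exp (c * z + d) ≤ Real.exp (Real.log (p z)) := Real.exp_le_exp.mpr hkey
    _ = p z := Real.exp_log hpz

/-- Strict version of `exp_affine_le_of_between`. -/
lemma exp_affine_lt_of_between (p : ℝ → ℝ)
    (hpord : ({x | 0 < p x}).OrdConnected)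
    (hpconc : ConcaveOn ℝ {x | 0 < p x} (fun x => Real.log (p x)))
    (c d x y z : ℝ) (hx : Real.exp (c * x + d) < p x) (hy : Real.exp (c * y + d) < p y)
    (hxz : x < z) (hzy : z < y) : Real.exp (c * z + d) < p z := by
  have hpx : 0 < p x := lt_trans (Real.exp_pos _) hx
  have hpy : 0 < p y := lt_trans (Real.exp_pos _) hy
  have hpz : 0 < p z := hpord.out hpx hpy ⟨hxz.le, hzy.le⟩
  have hyx : (0:ℝ) < y - x := by linarith
  set t := (y - z) / (y - x) with ht_def
  set s := (z - x) / (y - x) with hs_def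
  have ht : 0 < t := div_pos (by linarith) hyx
  have hs : 0 < s := div_pos (by linarith) hyx
  have hts : t + s = 1 := by rw [ht_def, hs_def]; field_simp; ring
  have hz : t * x + s * y = z := by rw [ht_def, hs_def]; field_simp; ring
  have hcon := hpconc.2 (Set.mem_setOf.mpr hpx) (Set.mem_setOf.mpr hpy) ht.le hs.le hts
  simp only [smul_eq_mul, hz] at hcon
  have hlx : c * x + d < Real.log (p x) := (Real.lt_log_iff_exp_lt hpx).mpr hx
  have hly : c * y + d < Real.log (p y) := (Real.lt_log_iff_exp_lt hpy).mpr hy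
  have e1 : t * (c * x + d) + s * (c * y + d) = c * z + d := by
    linear_combination c * hz + d * hts
  have h1 : t * (c * x + d) < t * Real.log (p x) := by
    exact mul_lt_mul_of_pos_left hlx ht
  have h2 : s * (c * y + d) < s * Real.log (p y) := by
    exact mul_lt_mul_of_pos_left hly hs
  have hkey : c * z + d < Real.log (p z) := by linarith
  calc Real.exp (c * z + d) < Real.exp (Real.log (p z)) := Real.exp_lt_exp.mpr hkey
    _ = p z := Real.exp_log hpz

/-- The complement of a union of `n` ord-connected subsets of `ℝ` is a union of
`n + 1` ord-connected sets. -/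
lemma compl_iUnion_ordConnected (n : ℕ) (A : Fin n → Set ℝ)
    (hA : ∀ i, (A i).OrdConnected) :
    ∃ I : Fin (n + 1) → Set ℝ, (∀ i, (I i).OrdConnected) ∧
      (⋃ i, A i)ᶜ = ⋃ i, I i := by
  set U := ⋃ i, A i with hU
  set B := Uᶜ with hB
  set Itop : Set ℝ := {x | x ∈ B ∧ ∀ w ∈ U, w ≤ x} with hItop
  set I' : Fin n → Set ℝ := fun i =>
    {x | x ∈ B ∧ ∃ a ∈ A i, x < a ∧ ∀ w, x < w → w < a → w ∈ U → w ∈ A i} with hI'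
  refine ⟨Fin.cons Itop I', ?_, ?_⟩
  · intro i
    refine Fin.cases ?_ ?_ i
    · rw [Fin.cons_zero]
      constructor
      intro x hx y hy z hz
      refine ⟨?_, fun w hw => (hx.2 w hw).trans hz.1⟩
      intro hzU
      have := hx.2 z hzU
      have hzx : z = x := le_antisymm this hz.1
      exact hx.1 (hzx ▸ hzU)
    · intro i
      rw [Fin.cons_succ]
      constructor
      intro x hx y hy z hz
      obtain ⟨hxB, a', ha'A, hxa', hxP⟩ := hx
      obtain ⟨hyB, a, haA, hya, hyP⟩ := hy
      rcases eq_or_lt_of_le hz.1 with rfl | hxz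
      · exact ⟨hxB, a', ha'A, hxa', hxP⟩
      rcases eq_or_lt_of_le hz.2 with rfl | hzy
      · exact ⟨hyB, a, haA, hya, hyP⟩
      have hzB : z ∈ B := by
        intro hzU
        have hzA : z ∈ A i := by
          rcases lt_or_ge z a' with h | h
          · exact hxP z hxz h hzU
          · exact (hA i).out ha'A haA ⟨h, (hzy.trans hya).le⟩
        have : y ∈ A i := (hA i).out hzA haA ⟨hzy.le, hya.le⟩
        exact hyB (Set.mem_iUnion.mpr ⟨i, this⟩)
      refine ⟨hzB, a, haA, hzy.trans hya, ?_⟩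
      intro w hzw hwa hwU
      rcases lt_or_ge w a' with h | h
      · exact hxP w (hxz.trans hzw) h hwU
      · exact (hA i).out ha'A haA ⟨h, hwa.le⟩
  · ext x
    simp only [Set.mem_iUnion]
    constructor
    · intro hxB
      by_cases hex : ∃ w ∈ U, x < w
      · obtain ⟨w0, hw0U, hxw0⟩ := hex
        set S : Set ℝ := {a | a ∈ U ∧ x < a} with hS
        have hSne : S.Nonempty := ⟨w0, hw0U, hxw0⟩
        have hSbdd : BddBelow S := ⟨x, fun a ha => ha.2.le⟩
        set a0 := sInf S with ha0
        by_cases ha0S : a0 ∈ S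
        · obtain ⟨i, hi⟩ := Set.mem_iUnion.mp ha0S.1
          refine ⟨i.succ, ?_⟩
          rw [Fin.cons_succ]
          exact ⟨hxB, a0, hi, ha0S.2, fun w hxw hwa hwU =>
            absurd (csInf_le hSbdd ⟨hwU, hxw⟩) (not_le.mpr hwa)⟩
        · have hpig : ∃ i, ∀ ε > (0:ℝ), ∃ s, s ∈ A i ∧ x < s ∧ s < a0 + ε := by
            by_contra hno
            push_neg at hno
            choose ε hε hεs using hno
            obtain ⟨i0, hi0⟩ := Set.mem_iUnion.mp hw0U
            have hn : (Finset.univ : Finset (Fin n)).Nonempty := ⟨i0, Finset.mem_univ _⟩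
            set εm := Finset.univ.inf' hn ε with hεm_def
            have hεm : 0 < εm := (Finset.lt_inf'_iff hn).mpr fun i _ => hε i
            have hlt : sInf S < a0 + εm := by rw [← ha0]; linarith
            obtain ⟨s, hsS, hslt⟩ := (csInf_lt_iff hSbdd hSne).mp hlt
            obtain ⟨j, hjA⟩ := Set.mem_iUnion.mp hsS.1
            have h1 := hεs j s hjA hsS.2
            have h2 : εm ≤ ε j := Finset.inf'_le _ (Finset.mem_univ j)
            linarith
          obtain ⟨i, hpi⟩ := hpig
          obtain ⟨s1, hs1A, hxs1, _⟩ := hpi 1 one_pos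
          refine ⟨i.succ, ?_⟩
          rw [Fin.cons_succ]
          refine ⟨hxB, s1, hs1A, hxs1, ?_⟩
          intro w hxw hws1 hwU
          have hwS : w ∈ S := ⟨hwU, hxw⟩
          have ha0w : a0 ≤ w := csInf_le hSbdd hwS
          have ha0w' : a0 < w := lt_of_le_of_ne ha0w (fun h => ha0S (h ▸ hwS))
          obtain ⟨s', hs'A, hxs', hs'w⟩ := hpi (w - a0) (by linarith)
          have hs'w' : s' < w := by linarith
          exact (hA i).out hs'A hs1A ⟨hs'w'.le, hws1.le⟩
      · push_neg at hex
        exact ⟨0, by rw [Fin.cons_zero]; exact ⟨hxB, hex⟩⟩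
    · rintro ⟨j, hj⟩
      refine Fin.cases (fun h => ?_) (fun i h => ?_) j hj
      · rw [Fin.cons_zero] at h; exact h.1
      · rw [Fin.cons_succ] at h; exact h.1

theorem stmt19 (D : ℕ) (p q : ℝ → ℝ)
    (hp0 : ∀ x, 0 ≤ p x) (hq0 : ∀ x, 0 ≤ q x)
    (hpdens : ∫ x, p x = 1) (hqdens : ∫ x, q x = 1)
    (hpopen : IsOpen {x | 0 < p x}) (hpord : ({x | 0 < p x}).OrdConnected)
    (hpconc : ConcaveOn ℝ {x | 0 < p x} (fun x => Real.log (p x)))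
    (hpcont : ContinuousOn (fun x => Real.log (p x)) {x | 0 < p x})
    (hqopen : IsOpen {x | 0 < q x}) (hqord : ({x | 0 < q x}).OrdConnected)
    (hqconc : ConcaveOn ℝ {x | 0 < q x} (fun x => Real.log (q x)))
    (hqcont : ContinuousOn (fun x => Real.log (q x)) {x | 0 < q x})
    (hpart : ∃ J : Fin (D + 1) → Set ℝ,
      (∀ i, (J i).OrdConnected) ∧ (⋃ i, J i) = Set.univ ∧
      Pairwise (Function.onFun Disjoint J) ∧
      ∀ i, (∀ x ∈ J i, q x = 0) ∨ ∃ c d : ℝ, ∀ x ∈ J i, q x = Real.exp (c * x + d)) :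
    (∃ I : Fin (D + 1) → Set ℝ, (∀ i, (I i).OrdConnected) ∧
      {x | q x < p x} = ⋃ i, I i) ∧
    (∃ I : Fin (D + 2) → Set ℝ, (∀ i, (I i).OrdConnected) ∧
      {x | p x < q x} = ⋃ i, I i) := by
  obtain ⟨J, hJord, hJcov, hJdisj, hJq⟩ := hpart
  have hcov : ∀ x : ℝ, ∃ i, x ∈ J i := fun x =>
    Set.mem_iUnion.mp (hJcov ▸ Set.mem_univ x)
  constructor
  · refine ⟨fun i => {x ∈ J i | q x < p x}, ?_, ?_⟩
    · intro i
      rcases hJq i with h0 | ⟨c, d, hqe⟩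
      · constructor
        intro x hx y hy z hz
        obtain ⟨hxJ, hxlt⟩ := hx
        obtain ⟨hyJ, hylt⟩ := hy
        have hzJ : z ∈ J i := (hJord i).out hxJ hyJ hz
        have hpx : 0 < p x := by rw [h0 x hxJ] at hxlt; exact hxlt
        have hpy : 0 < p y := by rw [h0 y hyJ] at hylt; exact hylt
        have hpz : 0 < p z := hpord.out hpx hpy hz
        exact ⟨hzJ, by rw [h0 z hzJ]; exact hpz⟩
      · constructor
        intro x hx y hy z hz
        obtain ⟨hxJ, hxlt⟩ := hx
        obtain ⟨hyJ, hylt⟩ := hy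
        have hzJ : z ∈ J i := (hJord i).out hxJ hyJ hz
        rw [hqe x hxJ] at hxlt
        rw [hqe y hyJ] at hylt
        refine ⟨hzJ, ?_⟩
        rw [hqe z hzJ]
        rcases eq_or_lt_of_le hz.1 with rfl | hxz
        · exact hxlt
        rcases eq_or_lt_of_le hz.2 with rfl | hzy
        · exact hylt
        exact exp_affine_lt_of_between p hpord hpconc c d x y z hxlt hylt hxz hzy
    · ext x
      simp only [Set.mem_setOf_eq, Set.mem_iUnion]
      constructor
      · intro h
        obtain ⟨i, hi⟩ := hcov x
        exact ⟨i, hi, h⟩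
      · rintro ⟨i, _, h⟩
        exact h
  · set A : Fin (D + 1) → Set ℝ := fun i => {x ∈ J i | q x ≤ p x} with hAdef
    have hAord : ∀ i, (A i).OrdConnected := by
      intro i
      rcases hJq i with h0 | ⟨c, d, hqe⟩
      · constructor
        intro x hx y hy z hz
        have hzJ : z ∈ J i := (hJord i).out hx.1 hy.1 hz
        exact ⟨hzJ, by rw [h0 z hzJ]; exact hp0 z⟩
      · constructor
        intro x hx y hy z hz
        obtain ⟨hxJ, hxle⟩ := hx
        obtain ⟨hyJ, hyle⟩ := hy
        have hzJ : z ∈ J i := (hJord i).out hxJ hyJ hz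
        rw [hqe x hxJ] at hxle
        rw [hqe y hyJ] at hyle
        refine ⟨hzJ, ?_⟩
        rw [hqe z hzJ]
        rcases eq_or_lt_of_le hz.1 with rfl | hxz
        · exact hxle
        rcases eq_or_lt_of_le hz.2 with rfl | hzy
        · exact hyle
        exact exp_affine_le_of_between p hpord hpconc c d x y z hxle hyle hxz hzy
    obtain ⟨I, hIord, hIeq⟩ := compl_iUnion_ordConnected (D + 1) A hAord
    refine ⟨I, hIord, ?_⟩
    rw [← hIeq]
    ext x
    simp only [Set.mem_setOf_eq, Set.mem_compl_iff, Set.mem_iUnion, not_exists]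
    constructor
    · rintro hlt i ⟨hxJ, hqp⟩
      exact absurd hlt (not_lt.mpr hqp)
    · intro h
      obtain ⟨i, hxJ⟩ := hcov x
      by_contra hnlt
      push_neg at hnlt
      exact h i ⟨hxJ, hnlt⟩
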